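/- Let I be a zero-dimensional radical ideal of R = ℂ[x₁,…,xₙ]. Then the companion endomorphisms T₁,…,Tₙ of R/I are simultaneously diagonalizable: there exists a basis of the finite-dimensional ℂ-vector space R/I consisting of vectors that are eigenvectors of every T_i. -/

import Mathlib

set_option maxHeartbeats 1000000


/-- For a zero-dimensional radical ideal `I` of `ℂ[x₁,…,xₙ]`, the companion
endomorphisms `T₁,…,Tₙ` of `R ⧸ I` are simultaneously diagonalizable: there
is a basis of `R ⧸ I` consisting of simultaneous eigenvectors of all the
`Tᵢ`. -/
theorem companion_simultaneously_diagonalizable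
    (n : ℕ) (I : Ideal (MvPolynomial (Fin n) ℂ))
    (hfd : FiniteDimensional ℂ (MvPolynomial (Fin n) ℂ ⧸ I))
    (hrad : I.IsRadical) :
    ∃ (ι : Type) (b : Module.Basis ι ℂ (MvPolynomial (Fin n) ℂ ⧸ I)),
      ∀ (j : ι) (i : Fin n), ∃ μ : ℂ,
        LinearMap.mulLeft ℂ (Ideal.Quotient.mk I (MvPolynomial.X i)) (b j)
          = μ • b j := by
  classical
  set A := MvPolynomial (Fin n) ℂ ⧸ I with hA
  have hred : IsReduced A := (Ideal.isRadical_iff_quotient_reduced I).mp hrad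
  have hart : IsArtinianRing A := isArtinian_of_tower ℂ inferInstance
  let ι : Type := {m : Ideal A // m.IsMaximal}
  haveI : Finite ι := (IsArtinianRing.setOfPred_isMaximal_finite A).to_subtype
  haveI : Fintype ι := Fintype.ofFinite ι
  letI instF : ∀ m : ι, Field (A ⧸ m.1) := fun m => @Ideal.Quotient.field A _ m.1 m.2
  haveI hfdq : ∀ m : ι, FiniteDimensional ℂ (A ⧸ m.1) := fun m =>
    FiniteDimensional.of_surjective (Ideal.Quotient.mkₐ ℂ m.1).toLinearMap
      (Ideal.Quotient.mkₐ_surjective ℂ m.1)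
  -- each residue field is ℂ
  have ψ : ∀ m : ι, (A ⧸ m.1) ≃ₐ[ℂ] ℂ := by
    intro m
    haveI := hfdq m
    haveI : Algebra.IsIntegral ℂ (A ⧸ m.1) := Algebra.IsIntegral.of_finite ℂ _
    refine (AlgEquiv.ofBijective (Algebra.ofId ℂ (A ⧸ m.1)) ⟨?_, ?_⟩).symm
    · exact (algebraMap ℂ (A ⧸ m.1)).injective
    · exact IsAlgClosed.algebraMap_bijective_of_isIntegral.2
  -- the algebra map A → (ι → ℂ)
  let φ : A →ₐ[ℂ] (ι → ℂ) :=
    Pi.algHom ℂ _ (fun m => (ψ m).toAlgHom.comp (Ideal.Quotient.mkₐ ℂ m.1))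
  have hcop : Pairwise fun i j : ι => IsCoprime i.1 j.1 := by
    intro i j hij
    exact Ideal.isCoprime_iff_sup_eq.mpr <|
      i.2.coprime_of_ne j.2 (Subtype.coe_injective.ne hij)
  have hφinj : Function.Injective φ := by
    rw [injective_iff_map_eq_zero]
    intro x hx
    have hx' : ∀ m : ι, Ideal.Quotient.mk m.1 x = 0 := by
      intro m
      have := congrFun hx m
      simp only [φ, Pi.algHom_apply, AlgHom.coe_comp, Function.comp_apply,
        Ideal.Quotient.mkₐ_eq_mk, AlgEquiv.coe_algHom, Pi.zero_apply] at this
      exact (ψ m).injective (by simpa using this)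
    have : IsNilpotent x := by
      rw [nilpotent_iff_mem_prime]
      intro p hp
      have hm : p.IsMaximal := (IsArtinianRing.isPrime_iff_isMaximal p).mp hp
      exact Ideal.Quotient.eq_zero_iff_mem.mp (hx' ⟨p, hm⟩)
    exact this.eq_zero
  have hφsurj : Function.Surjective φ := by
    intro y
    obtain ⟨r, hr⟩ := Ideal.pi_quotient_surjective hcop (fun m => (ψ m).symm (y m))
    refine ⟨r, funext fun m => ?_⟩
    simp only [φ, Pi.algHom_apply, AlgHom.coe_comp, Function.comp_apply,
      Ideal.Quotient.mkₐ_eq_mk, AlgEquiv.coe_algHom]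
    rw [show (Ideal.Quotient.mk m.1 r : A ⧸ m.1) = (ψ m).symm (y m) from hr m]
    simp
  let e : A ≃ₐ[ℂ] (ι → ℂ) := AlgEquiv.ofBijective φ ⟨hφinj, hφsurj⟩
  let b : Module.Basis ι ℂ A := (Pi.basisFun ℂ ι).map e.symm.toLinearEquiv
  refine ⟨ι, b, fun j i => ?_⟩
  set a : A := Ideal.Quotient.mk I (MvPolynomial.X i) with ha
  refine ⟨e a j, ?_⟩
  have hb : b j = e.symm ((Pi.single j 1 : ι → ℂ)) := by
    simp [b, Module.Basis.map_apply]
  apply e.toLinearEquiv.injective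
  have h1 : e.toLinearEquiv (LinearMap.mulLeft ℂ a (b j)) = e a * (Pi.single j 1 : ι → ℂ) := by
    simp only [LinearMap.mulLeft_apply, AlgEquiv.toLinearEquiv_apply, map_mul, hb,
      AlgEquiv.apply_symm_apply]
  have h2 : e.toLinearEquiv ((e a j) • b j) = (e a j) • (Pi.single j 1 : ι → ℂ) := by
    simp only [AlgEquiv.toLinearEquiv_apply, map_smul, hb, AlgEquiv.apply_symm_apply]
  rw [h1, h2]
  funext k
  by_cases hk : k = j
  · subst hk; simp
  · simp [Pi.single_apply, hk]
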